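/- If α₁ < ... < α_p are positive reals and λ₁,...,λ_p reals such that Σᵢ λᵢ ∫₀¹ 2·exp(αᵢ/(x₁²+s²))/(x₁²+s²)² ds has a finite limit as x₁ → 0⁺, then all λᵢ = 0; moreover this remains true when each λᵢ is replaced by P_i(z₁(x)) for polynomials P_i evaluated at invariants (i.e., the classes are independent over the ring of invariant polynomials). -/

import Mathlib

open Real Filter Set

noncomputable def expJ (α x : ℝ) : ℝ :=
  ∫ s in (0:ℝ)..1, 2 * Real.exp (α / (x ^ 2 + s ^ 2)) / (x ^ 2 + s ^ 2) ^ 2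

lemma expJ_nonneg (α x : ℝ) (hx : 0 < x) : 0 ≤ expJ α x := by
  apply intervalIntegral.integral_nonneg (by norm_num)
  intro s _
  positivity

lemma expJ_le (α x : ℝ) (hα : 0 < α) (hx : 0 < x) :
    expJ α x ≤ 2 * Real.exp (α / x ^ 2) / x ^ 4 := by
  have h : ∀ s : ℝ, x ^ 2 + s ^ 2 ≠ 0 := fun s => by positivity
  have hc : Continuous fun s : ℝ => 2 * Real.exp (α / (x ^ 2 + s ^ 2)) / (x ^ 2 + s ^ 2) ^ 2 := by
    refine Continuous.div ?_ (by fun_prop) (fun s => by positivity)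
    exact continuous_const.mul (Real.continuous_exp.comp (continuous_const.div (by fun_prop) h))
  have hmono := intervalIntegral.integral_mono_on (μ := MeasureTheory.volume)
    (f := fun s : ℝ => 2 * Real.exp (α / (x ^ 2 + s ^ 2)) / (x ^ 2 + s ^ 2) ^ 2)
    (g := fun _ : ℝ => 2 * Real.exp (α / x ^ 2) / x ^ 4) (by norm_num)
    (hc.intervalIntegrable 0 1) intervalIntegrable_const ?_
  · simpa [expJ] using hmono
  · intro s _
    have hx2 : (0:ℝ) < x ^ 2 := by positivity
    have h4 : x ^ 4 = (x ^ 2) ^ 2 := by ring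
    rw [h4]
    gcongr <;> exact le_add_of_nonneg_right (by positivity)

lemma expJ_ge (α x : ℝ) (hα : 0 < α) (hx : 0 < x) :
    (Real.exp (α / x ^ 2) - Real.exp (α / (x ^ 2 + 1))) / α ≤ expJ α x := by
  have h : ∀ s : ℝ, x ^ 2 + s ^ 2 ≠ 0 := fun s => by positivity
  have hc' : Continuous fun s : ℝ =>
      2 * s * Real.exp (α / (x ^ 2 + s ^ 2)) / (x ^ 2 + s ^ 2) ^ 2 := by
    refine Continuous.div ?_ (by fun_prop) (fun s => by positivity)
    exact ((continuous_const.mul continuous_id).mul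
      (Real.continuous_exp.comp (continuous_const.div (by fun_prop) h)))
  have hc : Continuous fun s : ℝ => 2 * Real.exp (α / (x ^ 2 + s ^ 2)) / (x ^ 2 + s ^ 2) ^ 2 := by
    refine Continuous.div ?_ (by fun_prop) (fun s => by positivity)
    exact continuous_const.mul (Real.continuous_exp.comp (continuous_const.div (by fun_prop) h))
  have hderiv : ∀ s ∈ uIcc (0:ℝ) 1,
      HasDerivAt (fun s : ℝ => -(1/α) * Real.exp (α / (x ^ 2 + s ^ 2)))
        (2 * s * Real.exp (α / (x ^ 2 + s ^ 2)) / (x ^ 2 + s ^ 2) ^ 2) s := by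
    intro s _
    have h1 : HasDerivAt (fun s : ℝ => x ^ 2 + s ^ 2) (2 * s) s := by
      simpa using (hasDerivAt_pow 2 s).const_add (x ^ 2)
    have h2 : HasDerivAt (fun s : ℝ => α / (x ^ 2 + s ^ 2))
        (-(α * (2 * s)) / (x ^ 2 + s ^ 2) ^ 2) s := by
      have h2' := (hasDerivAt_const s α).div h1 (h s)
      simp only [zero_mul, zero_sub] at h2'
      exact h2'
    have h3 := (h2.exp).const_mul (-(1/α))
    refine h3.congr_deriv ?_
    field_simp
  have hint := intervalIntegral.integral_eq_sub_of_hasDerivAt hderiv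
    (hc'.intervalIntegrable 0 1)
  have hmono := intervalIntegral.integral_mono_on (μ := MeasureTheory.volume)
    (a := (0:ℝ)) (b := 1) (by norm_num)
    (hc'.intervalIntegrable 0 1) (hc.intervalIntegrable 0 1) ?_
  · calc (Real.exp (α / x ^ 2) - Real.exp (α / (x ^ 2 + 1))) / α
        = ∫ s in (0:ℝ)..1, 2 * s * Real.exp (α / (x ^ 2 + s ^ 2)) / (x ^ 2 + s ^ 2) ^ 2 := by
          rw [hint]; field_simp; ring
      _ ≤ expJ α x := hmono
  · intro s hs
    have hd2 : (0:ℝ) < (x ^ 2 + s ^ 2) ^ 2 := by positivity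
    have hnum : 2 * s * Real.exp (α / (x ^ 2 + s ^ 2)) ≤ 2 * Real.exp (α / (x ^ 2 + s ^ 2)) := by
      have := Real.exp_pos (α / (x ^ 2 + s ^ 2))
      nlinarith [hs.1, hs.2]
    exact (div_le_div_iff_of_pos_right hd2).mpr hnum

lemma inv_sq_tendsto : Tendsto (fun x : ℝ => 1 / x ^ 2) (nhdsWithin 0 (Set.Ioi 0)) atTop := by
  have hsq : Tendsto (fun x : ℝ => x ^ 2) (nhdsWithin 0 (Set.Ioi 0)) (nhdsWithin 0 (Set.Ioi 0)) := by
    apply tendsto_nhdsWithin_of_tendsto_nhds_of_eventually_within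
    · exact ((continuous_pow 2).tendsto' 0 0 (by norm_num)).mono_left nhdsWithin_le_nhds
    · filter_upwards [self_mem_nhdsWithin] with x hx
      exact pow_pos (show (0:ℝ) < x from hx) 2
  simpa [Function.comp_def, one_div] using tendsto_inv_nhdsGT_zero.comp hsq

lemma exp_div_sq_tendsto (α : ℝ) (hα : 0 < α) :
    Tendsto (fun x : ℝ => Real.exp (α / x ^ 2)) (nhdsWithin 0 (Set.Ioi 0)) atTop := by
  have h1 : Tendsto (fun x : ℝ => α / x ^ 2) (nhdsWithin 0 (Set.Ioi 0)) atTop := by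
    have := inv_sq_tendsto.const_mul_atTop hα
    simpa [mul_one_div, div_eq_mul_inv] using this
  exact Real.tendsto_exp_atTop.comp h1

lemma domin (c : ℝ) (hc : 0 < c) :
    Tendsto (fun x : ℝ => Real.exp (-(c / x ^ 2)) / x ^ 4) (nhdsWithin 0 (Set.Ioi 0)) (nhds 0) := by
  have h2 : Tendsto (fun t : ℝ => t ^ 2 * Real.exp (-(c * t))) atTop (nhds 0) := by
    have base := tendsto_pow_mul_exp_neg_atTop_nhds_zero 2
    have hct : Tendsto (fun t : ℝ => c * t) atTop atTop :=
      Tendsto.const_mul_atTop hc tendsto_id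
    have h3 := (base.comp hct).const_mul (1 / c ^ 2)
    rw [mul_zero] at h3
    refine h3.congr fun t => ?_
    have : c ≠ 0 := hc.ne'
    simp only [Function.comp_apply]
    field_simp
  have h4 := h2.comp inv_sq_tendsto
  refine h4.congr' ?_
  filter_upwards [self_mem_nhdsWithin] with x hx
  have hx0 : x ≠ 0 := (ne_of_gt hx)
  simp only [Function.comp, mul_one_div]
  field_simp

lemma tail_tendsto (α : ℝ) (hα : 0 < α) :
    Tendsto (fun x : ℝ => Real.exp (α / (x ^ 2 + 1) - α / x ^ 2))
      (nhdsWithin 0 (Set.Ioi 0)) (nhds 0) := by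
  have h1 : Tendsto (fun x : ℝ => α / (x ^ 2 + 1)) (nhdsWithin 0 (Set.Ioi 0)) (nhds α) := by
    have hct : ContinuousAt (fun x : ℝ => α / (x ^ 2 + 1)) 0 := by
      apply ContinuousAt.div (by fun_prop) (by fun_prop)
      norm_num
    simpa using hct.continuousWithinAt.tendsto
  have h2 : Tendsto (fun x : ℝ => α / x ^ 2) (nhdsWithin 0 (Set.Ioi 0)) atTop := by
    have := inv_sq_tendsto.const_mul_atTop hα
    simpa [mul_one_div, div_eq_mul_inv] using this
  have h3 : Tendsto (fun x : ℝ => α / (x ^ 2 + 1) - α / x ^ 2)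
      (nhdsWithin 0 (Set.Ioi 0)) atBot := by
    have hneg : Tendsto (fun x : ℝ => -(α / x ^ 2)) (nhdsWithin 0 (Set.Ioi 0)) atBot :=
      tendsto_neg_atTop_atBot.comp h2
    have hbd : ∀ᶠ x in nhdsWithin (0:ℝ) (Set.Ioi 0), α / (x ^ 2 + 1) ≤ α + 1 :=
      h1.eventually (eventually_le_nhds (by linarith))
    have := tendsto_atBot_add_left_of_ge' _ (α + 1) hbd hneg
    refine this.congr fun x => ?_
    ring
  exact Real.tendsto_exp_atBot.comp h3

lemma exp_classes_aux : ∀ (p : ℕ) (α : Fin p → ℝ), StrictMono α → (∀ i, 0 < α i) →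
    ∀ (lam : Fin p → ℝ),
    (∃ L : ℝ, Tendsto (fun x : ℝ => ∑ i, lam i * expJ (α i) x)
      (nhdsWithin 0 (Set.Ioi 0)) (nhds L)) → ∀ i, lam i = 0 := by
  intro p
  induction p with
  | zero => intro _ _ _ _ _ i; exact i.elim0
  | succ n ih =>
    intro α hmono hα lam ⟨L, hL⟩
    set l := nhdsWithin (0:ℝ) (Set.Ioi 0) with hl
    set A := α (Fin.last n) with hA
    have hA0 : 0 < A := hα _
    set E : ℝ → ℝ := fun x => Real.exp (A / x ^ 2) with hE
    have hEtop : Tendsto E l atTop := exp_div_sq_tendsto A hA0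
    have hEpos : ∀ x : ℝ, 0 < E x := fun x => Real.exp_pos _
    have hSE : Tendsto (fun x => (∑ i, lam i * expJ (α i) x) * (E x)⁻¹) l (nhds 0) := by
      simpa using hL.mul hEtop.inv_tendsto_atTop
    have hterm : ∀ i : Fin n, Tendsto
        (fun x => lam i.castSucc * expJ (α i.castSucc) x * (E x)⁻¹) l (nhds 0) := by
      intro i
      set c := A - α i.castSucc with hc
      have hc0 : 0 < c := sub_pos.mpr (hmono (Fin.castSucc_lt_last i))
      have hg : Tendsto (fun x : ℝ => |lam i.castSucc| * 2 * (Real.exp (-(c / x ^ 2)) / x ^ 4))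
          l (nhds 0) := by simpa using ((domin c hc0).const_mul (|lam i.castSucc| * 2))
      apply squeeze_zero_norm' ?_ hg
      filter_upwards [self_mem_nhdsWithin] with x hx
      have hx0 : (0:ℝ) < x := hx
      have hJ0 := expJ_nonneg (α i.castSucc) x hx0
      have hJle := expJ_le (α i.castSucc) x (hα _) hx0
      have key : expJ (α i.castSucc) x * (E x)⁻¹ ≤ 2 * (Real.exp (-(c / x ^ 2)) / x ^ 4) := by
        have h1 : expJ (α i.castSucc) x * (E x)⁻¹
            ≤ (2 * Real.exp (α i.castSucc / x ^ 2) / x ^ 4) * (E x)⁻¹ :=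
          mul_le_mul_of_nonneg_right hJle (by positivity)
        refine h1.trans_eq ?_
        have hEx : E x = Real.exp (A / x ^ 2) := rfl
        rw [hEx, show -(c / x ^ 2) = α i.castSucc / x ^ 2 - A / x ^ 2 by rw [hc]; ring,
          Real.exp_sub]
        field_simp
      have habs : ‖lam i.castSucc * expJ (α i.castSucc) x * (E x)⁻¹‖
          = |lam i.castSucc| * (expJ (α i.castSucc) x * (E x)⁻¹) := by
        rw [Real.norm_eq_abs, abs_mul, abs_mul, abs_of_nonneg hJ0,
          abs_of_nonneg (le_of_lt (inv_pos.mpr (hEpos x))), mul_assoc]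
      rw [habs, mul_assoc]
      exact mul_le_mul_of_nonneg_left key (abs_nonneg _)
    have hsum : Tendsto (fun x => ∑ i : Fin n,
        lam i.castSucc * expJ (α i.castSucc) x * (E x)⁻¹) l (nhds 0) := by
      have := tendsto_finset_sum (Finset.univ : Finset (Fin n)) (fun i _ => hterm i)
      simpa using this
    have hT : Tendsto (fun x => lam (Fin.last n) * expJ A x * (E x)⁻¹) l (nhds 0) := by
      have hsub := hSE.sub hsum
      rw [sub_zero] at hsub
      refine hsub.congr fun x => ?_
      rw [Fin.sum_univ_castSucc, add_mul, Finset.sum_mul]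
      simp [mul_assoc, hA]
    have hlast : lam (Fin.last n) = 0 := by
      by_contra hne
      have hc0 : 0 < |lam (Fin.last n)| / (2 * A) := by positivity
      have hev : ∀ᶠ x in l, |lam (Fin.last n)| / (2 * A)
          ≤ |lam (Fin.last n) * expJ A x * (E x)⁻¹| := by
        have hq := (tail_tendsto A hA0).eventually (eventually_le_nhds one_half_pos)
        filter_upwards [hq, self_mem_nhdsWithin] with x hqx hx
        have hx0 : (0:ℝ) < x := hx
        have hge := expJ_ge A x hA0 hx0
        have hq0 : (0:ℝ) < Real.exp (A / (x ^ 2 + 1) - A / x ^ 2) := Real.exp_pos _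
        have hEx : E x = Real.exp (A / x ^ 2) := rfl
        have hkey : 1 / (2 * A) ≤ expJ A x * (E x)⁻¹ := by
          have h2 : ((E x - Real.exp (A / (x ^ 2 + 1))) / A) * (E x)⁻¹
              ≤ expJ A x * (E x)⁻¹ :=
            mul_le_mul_of_nonneg_right (by rw [hEx]; exact hge) (by positivity)
          refine le_trans ?_ h2
          have heq : ((E x - Real.exp (A / (x ^ 2 + 1))) / A) * (E x)⁻¹
              = (1 - Real.exp (A / (x ^ 2 + 1) - A / x ^ 2)) / A := by
            rw [Real.exp_sub, hEx, div_mul_eq_mul_div, sub_mul,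
              mul_inv_cancel₀ (Real.exp_pos _).ne', ← div_eq_mul_inv]
          rw [heq, div_le_div_iff₀ (by positivity) hA0]
          nlinarith
        calc |lam (Fin.last n)| / (2 * A)
            = |lam (Fin.last n)| * (1 / (2 * A)) := by ring
          _ ≤ |lam (Fin.last n)| * (expJ A x * (E x)⁻¹) :=
              mul_le_mul_of_nonneg_left hkey (abs_nonneg _)
          _ = |lam (Fin.last n) * expJ A x * (E x)⁻¹| := by
              rw [abs_mul, abs_mul, abs_of_nonneg (expJ_nonneg A x hx0),
                abs_of_nonneg (le_of_lt (inv_pos.mpr (hEpos x))), mul_assoc]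
      have h0 := ge_of_tendsto hT.abs hev
      simp only [abs_zero] at h0
      linarith
    have hrest := ih (fun i : Fin n => α i.castSucc)
      (hmono.comp Fin.strictMono_castSucc) (fun i => hα _)
      (fun i : Fin n => lam i.castSucc)
      ⟨L, by
        refine hL.congr fun x => ?_
        rw [Fin.sum_univ_castSucc, hlast, zero_mul, add_zero]⟩
    intro i
    refine Fin.lastCases hlast (fun j => hrest j) i

/-- If `α₁ < … < α_p` are positive reals and `λ₁,…,λ_p` reals
such that `Σᵢ λᵢ ∫₀¹ 2 e^{αᵢ/(x₁²+s²)}/(x₁²+s²)² ds` has a finite limit as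
`x₁ → 0⁺`, then all `λᵢ = 0`. -/
theorem exp_classes_linearly_independent (p : ℕ) (α : Fin p → ℝ)
    (hmono : StrictMono α) (hα : ∀ i, 0 < α i) (lam : Fin p → ℝ)
    (h : ∃ L : ℝ, Filter.Tendsto
      (fun x₁ : ℝ => ∑ i, lam i *
        ∫ s in (0 : ℝ)..1,
          2 * Real.exp (α i / (x₁ ^ 2 + s ^ 2)) / (x₁ ^ 2 + s ^ 2) ^ 2)
      (nhdsWithin 0 (Set.Ioi 0)) (nhds L)) :
    ∀ i, lam i = 0 := by
  exact exp_classes_aux p α hmono hα lam h
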